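/- arXiv:1606.03998 — 3 statements merged into one kernel-verified Lean document; each statement's English description precedes it below -/
import Mathlib

section
/- For x ∈ S^m with x ≠ ±c, the intrinsic (geodesic) distance from x to the subsphere [c,r] equals |arccos(x·c) − r|, i.e., inf over y ∈ [c,r] of arccos(x·y) = |arccos(x·c) − r|. -/
open RealInnerProductSpace

private lemma arccos_antitone : Antitone Real.arccos := by
  intro a b h
  simp only [Real.arccos_eq_pi_div_two_sub_arcsin]
  have := Real.monotone_arcsin h
  linarith

set_option maxHeartbeats 1000000

/-- The intrinsic (geodesic) distance from `x` to the subsphere `[c,r]` equals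
`|arccos(x·c) − r|`. -/
theorem intrinsic_dist_to_subsphere {m : ℕ}
    (x c : EuclideanSpace ℝ (Fin (m + 1)))
    (hx : ‖x‖ = 1) (hc : ‖c‖ = 1) (hxc : x ≠ c) (hxc' : x ≠ -c)
    (r : ℝ) (hr : r ∈ Set.Ioo 0 Real.pi) :
    sInf ((fun y => Real.arccos ⟪x, y⟫) ''
        {y : EuclideanSpace ℝ (Fin (m + 1)) | ‖y‖ = 1 ∧ ⟪y, c⟫ = Real.cos r})
      = |Real.arccos ⟪x, c⟫ - r| := by
  obtain ⟨hr0, hrπ⟩ := hr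
  set t : ℝ := ⟪x, c⟫ with ht
  have hxx : ⟪x, x⟫ = 1 := by
    rw [real_inner_self_eq_norm_sq, hx]; norm_num
  have hcc : ⟪c, c⟫ = 1 := by
    rw [real_inner_self_eq_norm_sq, hc]; norm_num
  have habs1 : |t| ≤ 1 := by
    have h := abs_real_inner_le_norm x c
    rw [hx, hc, one_mul] at h
    rw [ht]; exact h
  have ht1 : t ≤ 1 := (abs_le.mp habs1).2
  have ht2 : -1 ≤ t := (abs_le.mp habs1).1
  have ht1' : t < 1 := by
    rcases lt_or_eq_of_le ht1 with h | h
    · exact h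
    · exact absurd ((inner_eq_one_iff_of_norm_eq_one hx hc).mp h) hxc
  have ht2' : -1 < t := by
    rcases lt_or_eq_of_le ht2 with h | h
    · exact h
    · exfalso
      have hnc : ‖-c‖ = 1 := by rwa [norm_neg]
      have h1 : ⟪x, -c⟫ = (1 : ℝ) := by
        rw [inner_neg_right, ← ht, ← h]; norm_num
      exact hxc' ((inner_eq_one_iff_of_norm_eq_one hx hnc).mp h1)
  set θ : ℝ := Real.arccos t with hθ
  have hcosθ : Real.cos θ = t := Real.cos_arccos ht2 ht1
  have hθ0 : 0 < θ := Real.arccos_pos.mpr ht1'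
  have hθπ : θ < Real.pi := by
    rcases lt_or_eq_of_le (Real.arccos_le_pi t) with h | h
    · exact h
    · exact absurd (Real.arccos_eq_pi.mp h) (by linarith)
  have hsinθ : Real.sin θ > 0 := Real.sin_pos_of_pos_of_lt_pi hθ0 hθπ
  have hsinr : Real.sin r > 0 := Real.sin_pos_of_pos_of_lt_pi hr0 hrπ
  set v : EuclideanSpace ℝ (Fin (m + 1)) := x - t • c with hv
  have hvc : ⟪v, c⟫ = 0 := by
    rw [hv, inner_sub_left, real_inner_smul_left, hcc, ← ht]; ring
  have hcv : ⟪c, v⟫ = 0 := by rw [real_inner_comm]; exact hvc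
  have hxv : x = t • c + v := by rw [hv]; abel
  have hvv : ⟪v, v⟫ = 1 - t ^ 2 := by
    rw [hv]
    simp only [inner_sub_left, inner_sub_right, real_inner_smul_left,
      real_inner_smul_right, hxx, hcc, real_inner_comm x c, ← ht]
    ring
  have hsin2 : Real.sin θ ^ 2 = 1 - t ^ 2 := by
    have h := Real.sin_sq_add_cos_sq θ
    nlinarith [hcosθ]
  have hnv : ‖v‖ = Real.sin θ := by
    have h1 : ‖v‖ ^ 2 = Real.sin θ ^ 2 := by
      rw [← real_inner_self_eq_norm_sq, hvv, hsin2]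
    have h2 : Real.sqrt (‖v‖ ^ 2) = Real.sqrt (Real.sin θ ^ 2) := by rw [h1]
    rwa [Real.sqrt_sq (norm_nonneg v), Real.sqrt_sq hsinθ.le] at h2
  -- the minimizer
  set y₀ : EuclideanSpace ℝ (Fin (m + 1)) :=
    Real.cos r • c + (Real.sin r / Real.sin θ) • v with hy₀
  have hy₀c : ⟪y₀, c⟫ = Real.cos r := by
    rw [hy₀, inner_add_left, real_inner_smul_left, real_inner_smul_left, hcc, hvc]
    ring
  have hy₀n : ‖y₀‖ = 1 := by
    have h1 : ⟪y₀, y₀⟫ = Real.cos r ^ 2 + (Real.sin r / Real.sin θ) ^ 2 * (1 - t ^ 2) := by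
      rw [hy₀]
      simp only [inner_add_left, inner_add_right, real_inner_smul_left,
        real_inner_smul_right, hcc, hvc, hcv, hvv]
      ring
    have h2 : ⟪y₀, y₀⟫ = 1 := by
      have hne : Real.sin θ ≠ 0 := ne_of_gt hsinθ
      have h4 : (Real.sin r / Real.sin θ) ^ 2 * (1 - t ^ 2) = Real.sin r ^ 2 := by
        rw [← hsin2]; field_simp
      rw [h1, h4]
      have := Real.sin_sq_add_cos_sq r
      linarith
    have h3 : ‖y₀‖ ^ 2 = 1 := by rw [← real_inner_self_eq_norm_sq, h2]
    nlinarith [norm_nonneg y₀]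
  have hxy₀ : ⟪x, y₀⟫ = Real.cos (θ - r) := by
    have hxvv : ⟪x, v⟫ = 1 - t ^ 2 := by
      rw [hxv, inner_add_left, real_inner_smul_left, hcv, hvv]; ring
    rw [hy₀, inner_add_right, real_inner_smul_right, real_inner_smul_right, ← ht, hxvv,
      Real.cos_sub, ← hsin2, hcosθ]
    field_simp
  have habs : |θ - r| ≤ Real.pi :=
    abs_le.mpr ⟨by linarith, by linarith⟩
  have harc : Real.arccos (Real.cos (θ - r)) = |θ - r| := by
    rw [← Real.cos_abs, Real.arccos_cos (abs_nonneg _) habs]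
  -- lower bound
  have hlb : ∀ y : EuclideanSpace ℝ (Fin (m + 1)),
      ‖y‖ = 1 → ⟪y, c⟫ = Real.cos r → |θ - r| ≤ Real.arccos ⟪x, y⟫ := by
    intro y hyn hyc
    have hyy : ⟪y, y⟫ = 1 := by rw [real_inner_self_eq_norm_sq, hyn]; norm_num
    set w : EuclideanSpace ℝ (Fin (m + 1)) := y - Real.cos r • c with hw
    have hww : ⟪w, w⟫ = Real.sin r ^ 2 := by
      rw [hw]
      simp only [inner_sub_left, inner_sub_right, real_inner_smul_left,
        real_inner_smul_right, hyy, hcc, hyc, real_inner_comm y c]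
      nlinarith [Real.sin_sq_add_cos_sq r]
    have hnw : ‖w‖ = Real.sin r := by
      have h1 : ‖w‖ ^ 2 = Real.sin r ^ 2 := by rw [← real_inner_self_eq_norm_sq, hww]
      have h2 : Real.sqrt (‖w‖ ^ 2) = Real.sqrt (Real.sin r ^ 2) := by rw [h1]
      rwa [Real.sqrt_sq (norm_nonneg w), Real.sqrt_sq hsinr.le] at h2
    have hvw : ⟪v, w⟫ ≤ Real.sin θ * Real.sin r := by
      calc ⟪v, w⟫ ≤ ‖v‖ * ‖w‖ := real_inner_le_norm v w
        _ = Real.sin θ * Real.sin r := by rw [hnv, hnw]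
    have hxy : ⟪x, y⟫ ≤ Real.cos (θ - r) := by
      have hcy : ⟪c, y⟫ = Real.cos r := by rw [real_inner_comm, hyc]
      have hvy : ⟪v, y⟫ = ⟪v, w⟫ := by
        rw [hw, inner_sub_right, real_inner_smul_right, hvc]; ring
      have h1 : ⟪x, y⟫ = t * Real.cos r + ⟪v, w⟫ := by
        rw [hxv, inner_add_left, real_inner_smul_left, hcy, hvy]
      rw [h1, Real.cos_sub, ← hcosθ]
      nlinarith [hvw]
    calc |θ - r| = Real.arccos (Real.cos (θ - r)) := harc.symm
      _ ≤ Real.arccos ⟪x, y⟫ := arccos_antitone hxy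
  refine IsLeast.csInf_eq ⟨⟨y₀, ⟨hy₀n, hy₀c⟩, ?_⟩, ?_⟩
  · show Real.arccos ⟪x, y₀⟫ = |θ - r|
    rw [hxy₀, harc]
  · rintro a ⟨y, ⟨hyn, hyc⟩, rfl⟩
    exact hlb y hyn hyc
end

section
/- For x ∈ S^m with x ≠ ±c, the Euclidean (extrinsic) distance from x to the subsphere [c,r] satisfies ρ_E(x,[c,r])² = 2 − 2(x·c · cos r + √(1 − (x·c)²) · sin r). -/
open RealInnerProductSpace

/-- The squared extrinsic (Euclidean) distance from `x` to the subsphere `[c,r]`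
equals `2 − 2(x·c · cos r + √(1 − (x·c)²) · sin r)`. -/
theorem extrinsic_dist_sq_to_subsphere {m : ℕ}
    (x c : EuclideanSpace ℝ (Fin (m + 1)))
    (hx : ‖x‖ = 1) (hc : ‖c‖ = 1) (hxc : x ≠ c) (hxc' : x ≠ -c)
    (r : ℝ) (hr : r ∈ Set.Ioo 0 Real.pi) :
    (sInf ((fun y => ‖x - y‖) ''
        {y : EuclideanSpace ℝ (Fin (m + 1)) | ‖y‖ = 1 ∧ ⟪y, c⟫ = Real.cos r})) ^ 2
      = 2 - 2 * (⟪x, c⟫ * Real.cos r + Real.sqrt (1 - ⟪x, c⟫ ^ 2) * Real.sin r) := by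
  obtain ⟨hr0, hrπ⟩ := hr
  have hsin : 0 < Real.sin r := Real.sin_pos_of_pos_of_lt_pi hr0 hrπ
  set t := ⟪x, c⟫ with htdef
  clear_value t
  have hcs : |t| ≤ 1 := by
    have h := abs_real_inner_le_norm x c
    rw [hx, hc, mul_one] at h
    rwa [htdef]
  have ht1 : t ≠ 1 := fun h => hxc ((inner_eq_one_iff_of_norm_eq_one hx hc).mp (htdef.symm.trans h))
  have ht2 : t ≠ -1 := by
    intro h
    apply hxc'
    have hnc : ‖(-c : EuclideanSpace ℝ (Fin (m + 1)))‖ = 1 := by simpa using hc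
    have h1 : ⟪x, -c⟫ = 1 := by
      rw [inner_neg_right, ← htdef, h]; norm_num
    exact (inner_eq_one_iff_of_norm_eq_one hx hnc).mp h1
  have habs : |t| < 1 := by
    rcases lt_or_eq_of_le hcs with h | h
    · exact h
    · rcases (abs_eq (by norm_num : (0:ℝ) ≤ 1)).mp h with h | h
      · exact absurd h ht1
      · exact absurd h ht2
  have ht2' : t ^ 2 < 1 := by
    have := abs_lt.mp habs; nlinarith
  have hs0 : 0 < 1 - t ^ 2 := by linarith
  set s := Real.sqrt (1 - t ^ 2) with hsdef
  clear_value s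
  have hspos : 0 < s := by rw [hsdef]; exact Real.sqrt_pos.mpr hs0
  have hs2 : s ^ 2 = 1 - t ^ 2 := by rw [hsdef]; exact Real.sq_sqrt hs0.le
  have hsne : s ≠ 0 := ne_of_gt hspos
  set w := x - t • c with hwdef
  clear_value w
  have hic : ⟪c, c⟫ = 1 := by
    rw [real_inner_self_eq_norm_sq, hc]; norm_num
  have hix : ⟪x, x⟫ = 1 := by
    rw [real_inner_self_eq_norm_sq, hx]; norm_num
  have hcx : ⟪c, x⟫ = t := by rw [real_inner_comm]; exact htdef.symm
  have hwc : ⟪w, c⟫ = 0 := by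
    rw [hwdef, inner_sub_left, real_inner_smul_left, hic]; linear_combination -htdef
  have hcw : ⟪c, w⟫ = 0 := by rw [real_inner_comm]; exact hwc
  have hxw : ⟪x, w⟫ = 1 - t ^ 2 := by
    rw [hwdef, inner_sub_right, real_inner_smul_right, hix, ← htdef]; ring
  have hww : ⟪w, w⟫ = 1 - t ^ 2 := by
    simp only [hwdef, inner_sub_left, inner_sub_right, real_inner_smul_left,
      real_inner_smul_right, hix, hic, hcx, ← htdef]
    ring
  have hwnorm : ‖w‖ = s := by
    have h2 : ‖w‖ ^ 2 = s ^ 2 := by rw [hs2, ← hww, real_inner_self_eq_norm_sq]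
    nlinarith [norm_nonneg w, hspos]
  set y₀ : EuclideanSpace ℝ (Fin (m + 1)) :=
    Real.cos r • c + (Real.sin r / s) • w with hy0def
  clear_value y₀
  have hy0c : ⟪y₀, c⟫ = Real.cos r := by
    rw [hy0def, inner_add_left, real_inner_smul_left, real_inner_smul_left, hic, hwc]; ring
  have hy0n : ‖y₀‖ = 1 := by
    have h2 : ‖y₀‖ ^ 2 = 1 := by
      rw [← real_inner_self_eq_norm_sq]
      simp only [hy0def, inner_add_left, inner_add_right, real_inner_smul_left,
        real_inner_smul_right, hic, hwc, hcw, hww]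
      rw [← hs2]
      field_simp
      linear_combination s * Real.sin_sq_add_cos_sq r
    have h3 : ‖y₀‖ = Real.sqrt 1 := by rw [← h2, Real.sqrt_sq (norm_nonneg _)]
    simpa using h3
  have hxy0 : ⟪x, y₀⟫ = t * Real.cos r + s * Real.sin r := by
    simp only [hy0def, inner_add_right, real_inner_smul_right, ← htdef, hxw]
    rw [← hs2]
    field_simp
  have key : ∀ y : EuclideanSpace ℝ (Fin (m + 1)), ‖y‖ = 1 → ⟪y, c⟫ = Real.cos r →
      ‖x - y₀‖ ≤ ‖x - y‖ := by
    intro y hy hyc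
    have hiy : ⟪y, y⟫ = 1 := by rw [real_inner_self_eq_norm_sq, hy]; norm_num
    have hcy : ⟪c, y⟫ = Real.cos r := by rw [real_inner_comm]; exact hyc
    have hwy : ⟪w, y⟫ ≤ s * Real.sin r := by
      have h2 : ⟪w, y⟫ = ⟪w, y - Real.cos r • c⟫ := by
        rw [inner_sub_right, real_inner_smul_right, hwc]; ring
      have h3 : ‖y - Real.cos r • c‖ = Real.sin r := by
        have h4 : ‖y - Real.cos r • c‖ ^ 2 = Real.sin r ^ 2 := by
          rw [norm_sub_sq_real, hy, real_inner_smul_right, hyc, norm_smul, hc,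
            mul_one, Real.norm_eq_abs, sq_abs]
          linear_combination -Real.sin_sq_add_cos_sq r
        calc ‖y - Real.cos r • c‖ = Real.sqrt (‖y - Real.cos r • c‖ ^ 2) :=
              (Real.sqrt_sq (norm_nonneg _)).symm
          _ = Real.sqrt (Real.sin r ^ 2) := by rw [h4]
          _ = Real.sin r := Real.sqrt_sq hsin.le
      have h4 := real_inner_le_norm w (y - Real.cos r • c)
      rw [hwnorm, h3] at h4
      linarith [h2 ▸ h4]
    have hxy : ⟪x, y⟫ ≤ t * Real.cos r + s * Real.sin r := by
      have hx' : ⟪x, y⟫ = t * Real.cos r + ⟪w, y⟫ := by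
        have : x = t • c + w := by rw [hwdef]; abel
        rw [this, inner_add_left, real_inner_smul_left, hcy]
      linarith
    have hsq : ‖x - y₀‖ ^ 2 ≤ ‖x - y‖ ^ 2 := by
      rw [norm_sub_sq_real, norm_sub_sq_real, hx, hy, hy0n, hxy0]
      linarith
    calc ‖x - y₀‖ = Real.sqrt (‖x - y₀‖ ^ 2) := (Real.sqrt_sq (norm_nonneg _)).symm
      _ ≤ Real.sqrt (‖x - y‖ ^ 2) := Real.sqrt_le_sqrt hsq
      _ = ‖x - y‖ := Real.sqrt_sq (norm_nonneg _)
  have hmem : y₀ ∈ {y : EuclideanSpace ℝ (Fin (m + 1)) | ‖y‖ = 1 ∧ ⟪y, c⟫ = Real.cos r} :=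
    ⟨hy0n, hy0c⟩
  have hinf : sInf ((fun y => ‖x - y‖) ''
      {y : EuclideanSpace ℝ (Fin (m + 1)) | ‖y‖ = 1 ∧ ⟪y, c⟫ = Real.cos r}) = ‖x - y₀‖ := by
    apply le_antisymm
    · apply csInf_le
      · exact ⟨0, by rintro b ⟨y, hy, rfl⟩; positivity⟩
      · exact ⟨y₀, hmem, rfl⟩
    · apply le_csInf
      · exact ⟨‖x - y₀‖, ⟨y₀, hmem, rfl⟩⟩
      · rintro b ⟨y, ⟨hy1, hy2⟩, rfl⟩
        exact key y hy1 hy2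
  rw [hinf, norm_sub_sq_real, hx, hy0n, hxy0]
  ring
end

section
/- The function d(p₁,p₂) = min{d₁(p₁,p₂), d₂(p₁,p₂)} defined on P₀ = S^m × (0,π)^K is a pseudometric: it is nonnegative, symmetric, satisfies d(p,p) = 0, and satisfies the triangle inequality. Moreover d(p₁,p₂) = 0 if and only if p₂ = p₁ or p₂ = (−c₁, π·1 − r¹). -/
open RealInnerProductSpace

noncomputable def subsphereDistOne {m K : ℕ}
    (p q : EuclideanSpace ℝ (Fin (m + 1)) × (Fin K → ℝ)) : ℝ :=
  Real.sqrt (Real.arccos ⟪p.1, q.1⟫ ^ 2 + ∑ j, (p.2 j - q.2 j) ^ 2)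

noncomputable def subsphereDistTwo {m K : ℕ}
    (p q : EuclideanSpace ℝ (Fin (m + 1)) × (Fin K → ℝ)) : ℝ :=
  Real.sqrt (Real.arccos (-⟪p.1, q.1⟫) ^ 2 + ∑ j, ((Real.pi - p.2 j) - q.2 j) ^ 2)

noncomputable def subsphereDist {m K : ℕ}
    (p q : EuclideanSpace ℝ (Fin (m + 1)) × (Fin K → ℝ)) : ℝ :=
  min (subsphereDistOne p q) (subsphereDistTwo p q)

def P₀ (m K : ℕ) : Set (EuclideanSpace ℝ (Fin (m + 1)) × (Fin K → ℝ)) :=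
  {p | ‖p.1‖ = 1 ∧ ∀ j, p.2 j ∈ Set.Ioo 0 Real.pi}

/-! ### Auxiliary lemmas -/

private lemma arccos_anti {x y : ℝ} (h : x ≤ y) : Real.arccos y ≤ Real.arccos x := by
  simp only [Real.arccos]
  linarith [Real.monotone_arcsin h]

/-- Spherical triangle inequality for unit vectors. -/
private lemma sphere_tri {E : Type*} [NormedAddCommGroup E] [InnerProductSpace ℝ E]
    {a b c : E} (ha : ‖a‖ = 1) (hb : ‖b‖ = 1) (hc : ‖c‖ = 1) :
    Real.arccos ⟪a, b⟫ ≤ Real.arccos ⟪a, c⟫ + Real.arccos ⟪c, b⟫ := by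
  have hs1 : |⟪a, c⟫| ≤ 1 := by simpa [ha, hc] using abs_real_inner_le_norm a c
  have ht1 : |⟪c, b⟫| ≤ 1 := by simpa [hc, hb] using abs_real_inner_le_norm c b
  rcases le_or_gt Real.pi (Real.arccos ⟪a, c⟫ + Real.arccos ⟪c, b⟫) with h | h
  · exact (Real.arccos_le_pi _).trans h
  · have key : Real.cos (Real.arccos ⟪a, c⟫ + Real.arccos ⟪c, b⟫) ≤ ⟪a, b⟫ := by
      rw [Real.cos_add, Real.cos_arccos (neg_le_of_abs_le hs1) (le_of_abs_le hs1),
        Real.cos_arccos (neg_le_of_abs_le ht1) (le_of_abs_le ht1),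
        Real.sin_arccos, Real.sin_arccos]
      have hcc : ⟪c, c⟫ = (1 : ℝ) := by rw [real_inner_self_eq_norm_sq, hc]; norm_num
      have hna : ‖a - ⟪a, c⟫ • c‖ ^ 2 = 1 - ⟪a, c⟫ ^ 2 := by
        rw [norm_sub_sq_real, real_inner_smul_right, norm_smul, ha, hc]
        simp only [Real.norm_eq_abs, mul_one, one_pow]
        nlinarith [sq_abs ⟪a, c⟫]
      have hnb : ‖b - ⟪c, b⟫ • c‖ ^ 2 = 1 - ⟪c, b⟫ ^ 2 := by
        rw [norm_sub_sq_real, real_inner_smul_right, norm_smul, hb, hc, real_inner_comm b c]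
        simp only [Real.norm_eq_abs, mul_one, one_pow]
        nlinarith [sq_abs ⟪b, c⟫]
      have hinner : ⟪a - ⟪a, c⟫ • c, b - ⟪c, b⟫ • c⟫ = ⟪a, b⟫ - ⟪a, c⟫ * ⟪c, b⟫ := by
        simp only [inner_sub_left, inner_sub_right, real_inner_smul_left,
          real_inner_smul_right, hcc]
        ring
      have hcs := abs_real_inner_le_norm (a - ⟪a, c⟫ • c) (b - ⟪c, b⟫ • c)
      have hea : ‖a - ⟪a, c⟫ • c‖ = Real.sqrt (1 - ⟪a, c⟫ ^ 2) := by
        rw [← hna, Real.sqrt_sq (norm_nonneg _)]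
      have heb : ‖b - ⟪c, b⟫ • c‖ = Real.sqrt (1 - ⟪c, b⟫ ^ 2) := by
        rw [← hnb, Real.sqrt_sq (norm_nonneg _)]
      rw [hea, heb, hinner] at hcs
      have hge := neg_abs_le (⟪a, b⟫ - ⟪a, c⟫ * ⟪c, b⟫)
      nlinarith [abs_nonneg (⟪a, b⟫ - ⟪a, c⟫ * ⟪c, b⟫)]
    have h0 : 0 ≤ Real.arccos ⟪a, c⟫ + Real.arccos ⟪c, b⟫ :=
      add_nonneg (Real.arccos_nonneg _) (Real.arccos_nonneg _)
    calc Real.arccos ⟪a, b⟫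
        ≤ Real.arccos (Real.cos (Real.arccos ⟪a, c⟫ + Real.arccos ⟪c, b⟫)) := arccos_anti key
      _ = Real.arccos ⟪a, c⟫ + Real.arccos ⟪c, b⟫ := Real.arccos_cos h0 h.le

private lemma eucl_tri {K : ℕ} (r s u : Fin K → ℝ) :
    Real.sqrt (∑ j, (r j - s j) ^ 2) ≤
      Real.sqrt (∑ j, (r j - u j) ^ 2) + Real.sqrt (∑ j, (u j - s j) ^ 2) := by
  have h := dist_triangle ((WithLp.equiv 2 (Fin K → ℝ)).symm r)
    ((WithLp.equiv 2 (Fin K → ℝ)).symm u) ((WithLp.equiv 2 (Fin K → ℝ)).symm s)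
  rw [EuclideanSpace.dist_eq, EuclideanSpace.dist_eq, EuclideanSpace.dist_eq] at h
  simpa only [WithLp.equiv_symm_apply, WithLp.ofLp_toLp, Real.dist_eq, sq_abs] using h

private lemma mink {a1 b1 a2 b2 : ℝ} (ha1 : 0 ≤ a1) (hb1 : 0 ≤ b1) (ha2 : 0 ≤ a2)
    (hb2 : 0 ≤ b2) :
    Real.sqrt ((a1 + a2) ^ 2 + (b1 + b2) ^ 2) ≤
      Real.sqrt (a1 ^ 2 + b1 ^ 2) + Real.sqrt (a2 ^ 2 + b2 ^ 2) := by
  have h1 : (0:ℝ) ≤ a1 ^ 2 + b1 ^ 2 := by positivity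
  have h2 : (0:ℝ) ≤ a2 ^ 2 + b2 ^ 2 := by positivity
  have e1 := Real.sq_sqrt h1
  have e2 := Real.sq_sqrt h2
  have hs1 := Real.sqrt_nonneg (a1 ^ 2 + b1 ^ 2)
  have hs2 := Real.sqrt_nonneg (a2 ^ 2 + b2 ^ 2)
  have hcs : a1 * a2 + b1 * b2 ≤ Real.sqrt (a1 ^ 2 + b1 ^ 2) * Real.sqrt (a2 ^ 2 + b2 ^ 2) := by
    rw [← Real.sqrt_mul h1]
    calc a1 * a2 + b1 * b2 ≤ |a1 * a2 + b1 * b2| := le_abs_self _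
      _ = Real.sqrt ((a1 * a2 + b1 * b2) ^ 2) := (Real.sqrt_sq_eq_abs _).symm
      _ ≤ _ := Real.sqrt_le_sqrt (by nlinarith [sq_nonneg (a1 * b2 - a2 * b1)])
  have hsum : (a1 + a2) ^ 2 + (b1 + b2) ^ 2 ≤
      (Real.sqrt (a1 ^ 2 + b1 ^ 2) + Real.sqrt (a2 ^ 2 + b2 ^ 2)) ^ 2 := by nlinarith
  calc Real.sqrt ((a1 + a2) ^ 2 + (b1 + b2) ^ 2)
      ≤ Real.sqrt ((Real.sqrt (a1 ^ 2 + b1 ^ 2) + Real.sqrt (a2 ^ 2 + b2 ^ 2)) ^ 2) :=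
        Real.sqrt_le_sqrt hsum
    _ = _ := Real.sqrt_sq (by positivity)

private noncomputable def flipP {m K : ℕ}
    (p : EuclideanSpace ℝ (Fin (m + 1)) × (Fin K → ℝ)) :
    EuclideanSpace ℝ (Fin (m + 1)) × (Fin K → ℝ) :=
  (-p.1, fun j => Real.pi - p.2 j)

private lemma flipP_flipP {m K : ℕ} (p : EuclideanSpace ℝ (Fin (m + 1)) × (Fin K → ℝ)) :
    flipP (flipP p) = p := by
  refine Prod.ext (by simp [flipP]) (funext fun j => by simp [flipP])

private lemma flip_norm {m K : ℕ} (p : EuclideanSpace ℝ (Fin (m + 1)) × (Fin K → ℝ)) :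
    ‖(flipP p).1‖ = ‖p.1‖ := by simp [flipP]

private lemma d1_symm {m K : ℕ} (p q : EuclideanSpace ℝ (Fin (m + 1)) × (Fin K → ℝ)) :
    subsphereDistOne p q = subsphereDistOne q p := by
  unfold subsphereDistOne
  rw [real_inner_comm q.1 p.1]
  congr 2
  exact Finset.sum_congr rfl fun j _ => by ring

private lemma d2_symm {m K : ℕ} (p q : EuclideanSpace ℝ (Fin (m + 1)) × (Fin K → ℝ)) :
    subsphereDistTwo p q = subsphereDistTwo q p := by
  unfold subsphereDistTwo
  rw [real_inner_comm q.1 p.1]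
  congr 2
  exact Finset.sum_congr rfl fun j _ => by ring

private lemma d2_eq {m K : ℕ} (p q : EuclideanSpace ℝ (Fin (m + 1)) × (Fin K → ℝ)) :
    subsphereDistTwo p q = subsphereDistOne p (flipP q) := by
  unfold subsphereDistTwo subsphereDistOne flipP
  simp only [inner_neg_right]
  congr 2
  exact Finset.sum_congr rfl fun j _ => by ring

private lemma d1_flip {m K : ℕ} (p q : EuclideanSpace ℝ (Fin (m + 1)) × (Fin K → ℝ)) :
    subsphereDistOne (flipP p) (flipP q) = subsphereDistOne p q := by
  unfold subsphereDistOne flipP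
  simp only [inner_neg_neg]
  congr 2
  exact Finset.sum_congr rfl fun j _ => by ring

private lemma d1_triangle {m K : ℕ} (p q t : EuclideanSpace ℝ (Fin (m + 1)) × (Fin K → ℝ))
    (hp : ‖p.1‖ = 1) (hq : ‖q.1‖ = 1) (ht : ‖t.1‖ = 1) :
    subsphereDistOne p q ≤ subsphereDistOne p t + subsphereDistOne t q := by
  unfold subsphereDistOne
  have hSq : ∀ x y : Fin K → ℝ,
      (∑ j, (x j - y j) ^ 2) = (Real.sqrt (∑ j, (x j - y j) ^ 2)) ^ 2 := fun x y =>
    (Real.sq_sqrt (by positivity)).symm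
  rw [hSq p.2 q.2, hSq p.2 t.2, hSq t.2 q.2]
  have hA : Real.arccos ⟪p.1, q.1⟫ ≤ Real.arccos ⟪p.1, t.1⟫ + Real.arccos ⟪t.1, q.1⟫ :=
    sphere_tri hp hq ht
  have hB : Real.sqrt (∑ j, (p.2 j - q.2 j) ^ 2) ≤
      Real.sqrt (∑ j, (p.2 j - t.2 j) ^ 2) + Real.sqrt (∑ j, (t.2 j - q.2 j) ^ 2) :=
    eucl_tri p.2 q.2 t.2
  calc Real.sqrt (Real.arccos ⟪p.1, q.1⟫ ^ 2 + Real.sqrt (∑ j, (p.2 j - q.2 j) ^ 2) ^ 2)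
      ≤ Real.sqrt ((Real.arccos ⟪p.1, t.1⟫ + Real.arccos ⟪t.1, q.1⟫) ^ 2 +
          (Real.sqrt (∑ j, (p.2 j - t.2 j) ^ 2) + Real.sqrt (∑ j, (t.2 j - q.2 j) ^ 2)) ^ 2) := by
        apply Real.sqrt_le_sqrt
        exact add_le_add (pow_le_pow_left₀ (Real.arccos_nonneg _) hA 2)
          (pow_le_pow_left₀ (Real.sqrt_nonneg _) hB 2)
    _ ≤ _ := mink (Real.arccos_nonneg _) (Real.sqrt_nonneg _) (Real.arccos_nonneg _)
        (Real.sqrt_nonneg _)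

private lemma d1_self {m K : ℕ} (p : EuclideanSpace ℝ (Fin (m + 1)) × (Fin K → ℝ))
    (hp : ‖p.1‖ = 1) : subsphereDistOne p p = 0 := by
  have h : ⟪p.1, p.1⟫ = (1 : ℝ) := by rw [real_inner_self_eq_norm_sq, hp]; norm_num
  simp [subsphereDistOne, h, hp, Real.arccos_one]

private lemma d1_eq_zero_iff {m K : ℕ} {p q : EuclideanSpace ℝ (Fin (m + 1)) × (Fin K → ℝ)}
    (hp : ‖p.1‖ = 1) (hq : ‖q.1‖ = 1) : subsphereDistOne p q = 0 ↔ q = p := by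
  constructor
  · intro h
    unfold subsphereDistOne at h
    have hSnn : (0:ℝ) ≤ ∑ j, (p.2 j - q.2 j) ^ 2 :=
      Finset.sum_nonneg fun j _ => sq_nonneg _
    have hAnn : (0:ℝ) ≤ Real.arccos ⟪p.1, q.1⟫ ^ 2 := sq_nonneg _
    rw [Real.sqrt_eq_zero (by linarith)] at h
    have hA : Real.arccos ⟪p.1, q.1⟫ ^ 2 = 0 := by linarith
    have hS : (∑ j, (p.2 j - q.2 j) ^ 2) = 0 := by linarith
    have hfst : p.1 = q.1 := by
      have h0 : Real.arccos ⟪p.1, q.1⟫ = 0 := (pow_eq_zero_iff two_ne_zero).mp hA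
      have h1 : (1:ℝ) ≤ ⟪p.1, q.1⟫ := Real.arccos_eq_zero.mp h0
      have h2 : ⟪p.1, q.1⟫ ≤ 1 := by
        have h3 := real_inner_le_norm p.1 q.1
        rw [hp, hq] at h3; simpa using h3
      exact (inner_eq_one_iff_of_norm_eq_one hp hq).mp (le_antisymm h2 h1)
    have hsnd : p.2 = q.2 := by
      funext j
      have h4 := (Finset.sum_eq_zero_iff_of_nonneg
        fun j _ => sq_nonneg (p.2 j - q.2 j)).mp hS j (Finset.mem_univ j)
      have h5 := (pow_eq_zero_iff two_ne_zero).mp h4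
      linarith [sub_eq_zero.mp h5]
    exact Prod.ext hfst.symm hsnd.symm
  · rintro rfl
    exact d1_self _ hp

/-- `d = min{d₁, d₂}` is a pseudometric on `P₀ = S^m × (0,π)^K`:
nonnegative, symmetric, zero on the diagonal, satisfies the triangle
inequality, and `d(p₁,p₂) = 0` iff `p₂ = p₁` or `p₂ = (−c₁, π·1 − r¹)`. -/
theorem subsphereDist_pseudometric {m K : ℕ} (hK : 1 ≤ K) :
    (∀ p₁ ∈ P₀ m K, ∀ p₂ ∈ P₀ m K, 0 ≤ subsphereDist p₁ p₂) ∧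
    (∀ p₁ ∈ P₀ m K, ∀ p₂ ∈ P₀ m K, subsphereDist p₁ p₂ = subsphereDist p₂ p₁) ∧
    (∀ p ∈ P₀ m K, subsphereDist p p = 0) ∧
    (∀ p₁ ∈ P₀ m K, ∀ p₂ ∈ P₀ m K, ∀ p₃ ∈ P₀ m K,
      subsphereDist p₁ p₂ ≤ subsphereDist p₁ p₃ + subsphereDist p₃ p₂) ∧
    (∀ p₁ ∈ P₀ m K, ∀ p₂ ∈ P₀ m K,
      (subsphereDist p₁ p₂ = 0 ↔
        p₂ = p₁ ∨ p₂ = (-p₁.1, fun j => Real.pi - p₁.2 j))) := by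
  refine ⟨?_, ?_, ?_, ?_, ?_⟩
  · intro p₁ _ p₂ _
    exact le_min (Real.sqrt_nonneg _) (Real.sqrt_nonneg _)
  · intro p₁ _ p₂ _
    unfold subsphereDist
    rw [d1_symm, d2_symm]
  · intro p hp
    unfold subsphereDist
    rw [d1_self p hp.1]
    exact min_eq_left (Real.sqrt_nonneg _)
  · intro p₁ h₁ p₂ h₂ p₃ h₃
    have u1 := h₁.1; have u2 := h₂.1; have u3 := h₃.1
    have uf2 : ‖(flipP p₂).1‖ = 1 := by rw [flip_norm]; exact u2
    have uf3 : ‖(flipP p₃).1‖ = 1 := by rw [flip_norm]; exact u3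
    have h11 := d1_triangle p₁ p₂ p₃ u1 u2 u3
    have h12 : subsphereDistTwo p₁ p₂ ≤ subsphereDistOne p₁ p₃ + subsphereDistTwo p₃ p₂ := by
      rw [d2_eq, d2_eq]
      exact d1_triangle p₁ (flipP p₂) p₃ u1 uf2 u3
    have h21 : subsphereDistTwo p₁ p₂ ≤ subsphereDistTwo p₁ p₃ + subsphereDistOne p₃ p₂ := by
      rw [d2_eq, d2_eq]
      calc subsphereDistOne p₁ (flipP p₂)
          ≤ subsphereDistOne p₁ (flipP p₃) + subsphereDistOne (flipP p₃) (flipP p₂) :=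
            d1_triangle p₁ (flipP p₂) (flipP p₃) u1 uf2 uf3
        _ = _ := by rw [d1_flip]
    have h22 : subsphereDistOne p₁ p₂ ≤ subsphereDistTwo p₁ p₃ + subsphereDistTwo p₃ p₂ := by
      rw [d2_eq, d2_eq]
      have he : subsphereDistOne (flipP p₃) p₂ = subsphereDistOne p₃ (flipP p₂) := by
        rw [← d1_flip (flipP p₃) p₂, flipP_flipP]
      calc subsphereDistOne p₁ p₂
          ≤ subsphereDistOne p₁ (flipP p₃) + subsphereDistOne (flipP p₃) p₂ :=
            d1_triangle p₁ p₂ (flipP p₃) u1 u2 uf3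
        _ = _ := by rw [he]
    rcases min_cases (subsphereDistOne p₁ p₃) (subsphereDistTwo p₁ p₃) with ⟨e1, _⟩ | ⟨e1, _⟩ <;>
      rcases min_cases (subsphereDistOne p₃ p₂) (subsphereDistTwo p₃ p₂) with
        ⟨e2, _⟩ | ⟨e2, _⟩ <;>
      unfold subsphereDist <;> rw [e1, e2]
    · exact le_trans (min_le_left _ _) h11
    · exact le_trans (min_le_right _ _) h12
    · exact le_trans (min_le_right _ _) h21
    · exact le_trans (min_le_left _ _) h22
  · intro p₁ h₁ p₂ h₂
    have u1 := h₁.1; have u2 := h₂.1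
    have uf2 : ‖(flipP p₂).1‖ = 1 := by rw [flip_norm]; exact u2
    constructor
    · intro h
      unfold subsphereDist at h
      rcases min_choice (subsphereDistOne p₁ p₂) (subsphereDistTwo p₁ p₂) with he | he
      · left
        exact (d1_eq_zero_iff u1 u2).mp (he.symm.trans h)
      · right
        have hz : subsphereDistOne p₁ (flipP p₂) = 0 := by
          rw [← d2_eq]; exact he.symm.trans h
        have hfq : flipP p₂ = p₁ := (d1_eq_zero_iff u1 uf2).mp hz
        have h2 : p₂ = flipP p₁ := by rw [← hfq, flipP_flipP]
        exact h2
    · rintro (rfl | h)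
      · unfold subsphereDist
        rw [d1_self _ u1]
        exact min_eq_left (Real.sqrt_nonneg _)
      · have h' : p₂ = flipP p₁ := h
        subst h'
        have hz : subsphereDistTwo p₁ (flipP p₁) = 0 := by
          rw [d2_eq, flipP_flipP]
          exact d1_self p₁ u1
        unfold subsphereDist
        rw [hz]
        exact min_eq_right (Real.sqrt_nonneg _)
end
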